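/- Let H be a finite dimensional hereditary algebra, T a tilting module, and let X be a module in Sub(τT) (equivalently Hom(T,X) = 0). Suppose 0 → X → C → K → 0 is exact with X → C a minimal left add(τT)-approximation. Then Hom(T, K) = 0, i.e., K also lies in the torsion-free class F_T = Sub(τT). -/

import Mathlib

open CategoryTheory

/-- `Ext¹` of modules, as an abelian group (`ℤ`-module). -/
noncomputable def ext1 (Λ : Type) [Ring Λ] (M N : ModuleCat Λ) : ModuleCat ℤ :=
  ((Ext ℤ (ModuleCat Λ) 1).obj (Opposite.op M)).obj N

/-- `X ∈ add T`: `X` is a direct summand of a finite direct sum of copies of `T`. -/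
def memAdd (Λ : Type) [Ring Λ] (T X : ModuleCat Λ) : Prop :=
  ∃ (n : ℕ) (i : X →ₗ[Λ] (Fin n → T)) (p : (Fin n → T) →ₗ[Λ] X),
    p ∘ₗ i = LinearMap.id

/-- `X ∈ Sub T`: `X` is a submodule of a module in `add T`. -/
def memSub (Λ : Type) [Ring Λ] (T X : ModuleCat Λ) : Prop :=
  ∃ (n : ℕ) (i : X →ₗ[Λ] (Fin n → T)), Function.Injective i

/-- `T` is a tilting module: `pd T ≤ 1`, `Ext¹(T,T) = 0`, and there is an exact sequence
`0 → Λ → T₀ → T₁ → 0` with `T₀, T₁ ∈ add T`. -/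
structure IsTilting (Λ : Type) [Ring Λ] (T : ModuleCat Λ) : Prop where
  pd : ∃ (n : ℕ) (p : (Fin n → Λ) →ₗ[Λ] T), Function.Surjective p ∧
    Projective (ModuleCat.of Λ ↥(LinearMap.ker p))
  ext_vanish : Limits.IsZero (ext1 Λ T T)
  cores : ∃ (T₀ T₁ : ModuleCat.{0} Λ), memAdd Λ T T₀ ∧ memAdd Λ T T₁ ∧
    ∃ (f : Λ →ₗ[Λ] T₀) (g : T₀ →ₗ[Λ] T₁),
      Function.Injective f ∧ Function.Surjective g ∧ LinearMap.range f = LinearMap.ker g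

/-- `f : A → C` is a minimal left `add N`-approximation. -/
def IsMinimalLeftAddApprox (Λ : Type) [Ring Λ] (N A C : ModuleCat Λ)
    (f : A →ₗ[Λ] C) : Prop :=
  memAdd Λ N C ∧
  (∀ (N' : ModuleCat.{0} Λ), memAdd Λ N N' → ∀ g : A →ₗ[Λ] N',
    ∃ h : C →ₗ[Λ] N', h ∘ₗ f = g) ∧
  (∀ e : C →ₗ[Λ] C, e ∘ₗ f = f → Function.Bijective e)

section
open Limits

noncomputable section
variable (Λ : Type) [Ring Λ]

/-- two-term chain complex `0 → ker p → P₀` -/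
def twoTermComplex (P₀ : ModuleCat.{0} Λ) (S : Submodule Λ P₀) :
    ChainComplex (ModuleCat.{0} Λ) ℕ where
  X n := match n with
    | 0 => P₀
    | 1 => ModuleCat.of Λ S
    | _ => ModuleCat.of Λ PUnit
  d i j := match i, j with
    | 1, 0 => ModuleCat.ofHom S.subtype
    | _, _ => 0
  shape i j h := by
    match i, j with
    | 1, 0 => exact absurd rfl h
    | 0, j => rfl
    | 1, j+1 => rfl
    | i+2, j => rfl
  d_comp_d' i j k hij hjk := by
    simp only [ComplexShape.down_Rel] at hij hjk
    subst hij hjk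
    match k with
    | 0 => exact zero_comp
    | k+1 => exact zero_comp

end

noncomputable section
open HomologicalComplex
variable {Λ : Type} [Ring Λ]

def twoTermRes (M P₀ : ModuleCat.{0} Λ) (hP₀ : Projective P₀) (p : P₀ →ₗ[Λ] M)
    (hp : Function.Surjective p)
    (hker : Projective (ModuleCat.of Λ (LinearMap.ker p))) :
    ProjectiveResolution M where
  complex := twoTermComplex Λ P₀ (LinearMap.ker p)
  projective n := by
    match n with
    | 0 => exact hP₀
    | 1 => exact hker
    | n+2 => exact (ModuleCat.isZero_of_subsingleton (ModuleCat.of Λ PUnit)).projective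
  π := (ChainComplex.toSingle₀Equiv _ _).symm ⟨ModuleCat.ofHom p, by
    ext ⟨x, hx⟩
    exact hx⟩
  quasiIso := ⟨fun n => by
    cases n with
    | zero =>
      rw [ChainComplex.quasiIsoAt₀_iff, ShortComplex.quasiIso_iff_of_zeros']
      · constructor
        · rw [ShortComplex.moduleCat_exact_iff]
          intro x hx
          dsimp at hx ⊢
          change p x = 0 at hx
          exact ⟨⟨x, hx⟩, rfl⟩
        · rw [ModuleCat.epi_iff_surjective]
          dsimp
          change Function.Surjective p
          exact hp
      all_goals rfl
    | succ n =>
      rw [quasiIsoAt_iff_exactAt']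
      · match n with
        | 0 =>
          rw [HomologicalComplex.exactAt_iff' _ 2 1 0 (by simp) (by simp)]
          refine (ShortComplex.exact_iff_mono _ rfl).2 ?_
          rw [ModuleCat.mono_iff_injective]
          exact Subtype.val_injective
        | n+1 =>
          rw [HomologicalComplex.exactAt_iff' _ (n+3) (n+2) (n+1) (by simp) (by simp)]
          exact ShortComplex.exact_of_isZero_X₂ _
            (ModuleCat.isZero_of_subsingleton (ModuleCat.of Λ PUnit))
      · apply ChainComplex.exactAt_succ_single_obj⟩
end

section
variable {Λ : Type} [Ring Λ]

lemma ext1_isZero_iff (M N : ModuleCat.{0} Λ) (P₀ : Type) [AddCommGroup P₀]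
    [Module Λ P₀] (hP₀ : Projective (ModuleCat.of Λ P₀)) (p : P₀ →ₗ[Λ] M)
    (hp : Function.Surjective p)
    (hker : Projective (ModuleCat.of Λ (LinearMap.ker p))) :
    IsZero (ext1 Λ M N) ↔
      ∀ u : (LinearMap.ker p) →ₗ[Λ] N, ∃ v : P₀ →ₗ[Λ] N,
        v ∘ₗ (LinearMap.ker p).subtype = u := by
  let P := twoTermRes M (ModuleCat.of Λ P₀) hP₀ p hp hker
  have e := P.isoExt (R := ℤ) 1 N
  let Y := P.complex.linearYonedaObj ℤ N
  have h1 : IsZero (ext1 Λ M N) ↔ IsZero (Y.homology 1) :=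
    ⟨fun h => h.of_iso e.symm, fun h => h.of_iso e⟩
  rw [h1, ← HomologicalComplex.exactAt_iff_isZero_homology,
    HomologicalComplex.exactAt_iff' _ 0 1 2 (by simp) (by simp),
    ShortComplex.moduleCat_exact_iff]
  constructor
  · intro h u
    obtain ⟨v, hv⟩ := h (ModuleCat.ofHom u) (by
      show (Y.d 1 2) (ModuleCat.ofHom u) = 0
      rw [ChainComplex.linearYonedaObj_d]
      show (P.complex.d 2 1) ≫ (ModuleCat.ofHom u) = 0
      have : P.complex.d 2 1 = 0 := rfl
      rw [this]; exact zero_comp)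
    refine ⟨v.hom, ?_⟩
    have hv' : (Y.d 0 1) v = ModuleCat.ofHom u := hv
    rw [ChainComplex.linearYonedaObj_d] at hv'
    exact congrArg ModuleCat.Hom.hom hv'
  · intro h u _
    obtain ⟨v, hv⟩ := h u.hom
    refine ⟨ModuleCat.ofHom v, ?_⟩
    show (Y.d 0 1) (ModuleCat.ofHom v) = u
    rw [ChainComplex.linearYonedaObj_d]
    exact ModuleCat.hom_ext hv
end

section
variable {Λ : Type} [Ring Λ]

lemma isZero_ext1_pi
    (hher : ∀ P : ModuleCat.{0} Λ, Projective P → ∀ S : Submodule Λ P,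
      Projective (ModuleCat.of Λ S))
    (Z : ModuleCat.{0} Λ) [Module.Finite Λ Z]
    (hZ : IsZero (ext1 Λ Z Z)) (n : ℕ) :
    IsZero (ext1 Λ (ModuleCat.of Λ (Fin n → Z)) Z) := by
  obtain ⟨r, p₁, hp₁⟩ := Module.Finite.exists_fin' Λ Z
  have hPfree : Projective (ModuleCat.of Λ (Fin r → Λ)) :=
    (IsProjective.iff_projective _).1 inferInstance
  have hker₁ : Projective (ModuleCat.of Λ (LinearMap.ker p₁)) :=
    hher (ModuleCat.of Λ (Fin r → Λ)) hPfree (LinearMap.ker p₁)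
  have E₁ := (ext1_isZero_iff Z Z (Fin r → Λ) hPfree p₁ hp₁ hker₁).1 hZ
  -- presentation of the product
  have hP₀ : Projective (ModuleCat.of Λ (Fin n → Fin r → Λ)) :=
    (IsProjective.iff_projective _).1 inferInstance
  let pW : (Fin n → Fin r → Λ) →ₗ[Λ] (Fin n → Z) :=
    LinearMap.pi (fun i => p₁ ∘ₗ LinearMap.proj i)
  have hpW : Function.Surjective pW := by
    intro x
    choose y hy using fun i => hp₁ (x i)
    exact ⟨y, funext hy⟩
  have hkerW : Projective (ModuleCat.of Λ (LinearMap.ker pW)) :=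
    hher (ModuleCat.of Λ (Fin n → Fin r → Λ)) hP₀ (LinearMap.ker pW)
  rw [ext1_isZero_iff (ModuleCat.of Λ (Fin n → Z)) Z
    (Fin n → Fin r → Λ) hP₀ pW hpW hkerW]
  intro u
  -- coordinate inclusions
  have hmem : ∀ (i : Fin n) (y : LinearMap.ker p₁),
      Pi.single (M := fun _ : Fin n => Fin r → Λ) i (y : Fin r → Λ) ∈ LinearMap.ker pW := by
    intro i y
    rw [LinearMap.mem_ker]
    funext j
    simp only [pW, LinearMap.pi_apply, LinearMap.coe_comp, Function.comp_apply,
      LinearMap.proj_apply, Pi.zero_apply]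
    by_cases h : j = i
    · subst h; rw [Pi.single_eq_same]; exact y.2
    · rw [Pi.single_eq_of_ne h, map_zero]
  let e : Fin n → (LinearMap.ker p₁ →ₗ[Λ] LinearMap.ker pW) := fun i =>
    LinearMap.codRestrict _
      ((LinearMap.single Λ (fun _ : Fin n => Fin r → Λ) i) ∘ₗ (LinearMap.ker p₁).subtype)
      (fun y => hmem i y)
  choose v hv using fun i => E₁ (u ∘ₗ e i)
  refine ⟨∑ i, (v i) ∘ₗ LinearMap.proj i, ?_⟩
  ext x
  obtain ⟨xv, hxmem⟩ := x
  have hx : ∀ i, (xv i) ∈ LinearMap.ker p₁ := by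
    intro i
    rw [LinearMap.mem_ker]
    exact congrFun (LinearMap.mem_ker.1 hxmem) i
  have step1 : ∀ i, v i (xv i) = u (e i ⟨xv i, hx i⟩) := by
    intro i
    have h := congrArg (fun (w : LinearMap.ker p₁ →ₗ[Λ] Z) => w ⟨xv i, hx i⟩) (hv i)
    exact h
  have step2 : (∑ i, e i ⟨xv i, hx i⟩) = (⟨xv, hxmem⟩ : LinearMap.ker pW) := by
    apply Subtype.ext
    rw [Submodule.coe_sum]
    show (∑ i, Pi.single i (xv i)) = xv
    exact Finset.univ_sum_single _
  show (∑ i, (v i) ∘ₗ LinearMap.proj i) xv = u ⟨xv, hxmem⟩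
  calc (∑ i, (v i) ∘ₗ LinearMap.proj i) xv
      = ∑ i, v i (xv i) := by rw [LinearMap.sum_apply]; rfl
    _ = ∑ i, u (e i ⟨xv i, hx i⟩) := Finset.sum_congr rfl (fun i _ => step1 i)
    _ = u (∑ i, e i ⟨xv i, hx i⟩) := (map_sum u _ _).symm
    _ = u ⟨xv, hxmem⟩ := by rw [step2]
end

section
variable {Λ : Type} [Ring Λ]

lemma isZero_ext1_of_retract (A W N : ModuleCat.{0} Λ) (i : A →ₗ[Λ] W)
    (pr : W →ₗ[Λ] A) (hpi : pr ∘ₗ i = LinearMap.id)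
    (hW : IsZero (ext1 Λ W N)) : IsZero (ext1 Λ A N) := by
  let a : ext1 Λ W N ⟶ ext1 Λ A N :=
    ((Ext ℤ (ModuleCat Λ) 1).map (Quiver.Hom.op (ModuleCat.ofHom i))).app N
  let b : ext1 Λ A N ⟶ ext1 Λ W N :=
    ((Ext ℤ (ModuleCat Λ) 1).map (Quiver.Hom.op (ModuleCat.ofHom pr))).app N
  have hcomp : b ≫ a = 𝟙 _ := by
    show (((Ext ℤ (ModuleCat Λ) 1).map (Quiver.Hom.op (ModuleCat.ofHom pr))) ≫
      ((Ext ℤ (ModuleCat Λ) 1).map (Quiver.Hom.op (ModuleCat.ofHom i)))).app N = _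
    rw [← Functor.map_comp, ← op_comp]
    have h2 : ModuleCat.ofHom i ≫ ModuleCat.ofHom pr = 𝟙 A := ModuleCat.hom_ext hpi
    rw [h2, op_id, CategoryTheory.Functor.map_id]
    rfl
  rw [IsZero.iff_id_eq_zero, ← hcomp, hW.eq_of_tgt b 0, zero_comp]

end

universe uv
section
variable {Λ : Type} [Ring Λ]

lemma hher_down
    (hher : ∀ P : ModuleCat.{uv} Λ, Projective P → ∀ S : Submodule Λ P,
      Projective (ModuleCat.of Λ S)) :
    ∀ P : ModuleCat.{0} Λ, Projective P → ∀ S : Submodule Λ P,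
      Projective (ModuleCat.of Λ S) := by
  intro P hP S
  have h1 : Module.Projective Λ P := (IsProjective.iff_projective _).2 hP
  have h2 : Module.Projective Λ (ULift.{uv} P) :=
    Module.Projective.of_equiv (ULift.moduleEquiv.symm : P ≃ₗ[Λ] ULift.{uv} P)
  have h3 : Projective (ModuleCat.of Λ (ULift.{uv} P)) :=
    (IsProjective.iff_projective _).1 h2
  let eq1 : P ≃ₗ[Λ] ULift.{uv} P := ULift.moduleEquiv.symm
  let S' : Submodule Λ (ULift.{uv} P) := S.map (eq1 : P →ₗ[Λ] ULift.{uv} P)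
  have h4 := hher (ModuleCat.of Λ (ULift.{uv} P)) h3 S'
  have h5 : Module.Projective Λ S' := (IsProjective.iff_projective _).2 h4
  have e2 : ↥S ≃ₗ[Λ] ↥S' := eq1.submoduleMap S
  have h6 : Module.Projective Λ S := Module.Projective.of_equiv e2.symm
  exact (IsProjective.iff_projective _).1 h6
end

section
variable {Λ : Type} [Ring Λ]

lemma key_chase
    (hher0 : ∀ P : ModuleCat.{0} Λ, Projective P → ∀ S : Submodule Λ P,
      Projective (ModuleCat.of Λ S))
    (τT : ModuleCat.{0} Λ) [Module.Finite Λ τT]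
    (hextτ : IsZero (ext1 Λ τT τT))
    (X C K : ModuleCat.{0} Λ) [Module.Finite Λ C]
    (f : X →ₗ[Λ] C) (g : C →ₗ[Λ] K)
    (hf : Function.Injective f) (hg : Function.Surjective g)
    (hexact : LinearMap.range f = LinearMap.ker g)
    (hCadd : ∃ (n : ℕ) (i : C →ₗ[Λ] (Fin n → τT)) (p : (Fin n → τT) →ₗ[Λ] C),
      p ∘ₗ i = LinearMap.id)
    (happrox : ∀ u : X →ₗ[Λ] τT, ∃ h : C →ₗ[Λ] τT, h ∘ₗ f = u) :
    IsZero (ext1 Λ K τT) := by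
  obtain ⟨n, iC, pC, hCpi⟩ := hCadd
  have hWzero : IsZero (ext1 Λ (ModuleCat.of Λ (Fin n → τT)) τT) :=
    isZero_ext1_pi hher0 τT hextτ n
  have hCzero : IsZero (ext1 Λ C τT) :=
    isZero_ext1_of_retract C (ModuleCat.of Λ (Fin n → τT)) τT iC pC hCpi hWzero
  -- presentation of C
  obtain ⟨m, q, hq⟩ := Module.Finite.exists_fin' Λ C
  have hQfree : Projective (ModuleCat.of Λ (Fin m → Λ)) :=
    (IsProjective.iff_projective _).1 inferInstance
  have hkerq : Projective (ModuleCat.of Λ (LinearMap.ker q)) :=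
    hher0 (ModuleCat.of Λ (Fin m → Λ)) hQfree (LinearMap.ker q)
  have EC := (ext1_isZero_iff C τT (Fin m → Λ) hQfree q hq hkerq).1 hCzero
  -- presentation of K
  let p : (Fin m → Λ) →ₗ[Λ] K := g ∘ₗ q
  have hp : Function.Surjective p := hg.comp hq
  have hkerp : Projective (ModuleCat.of Λ (LinearMap.ker p)) :=
    hher0 (ModuleCat.of Λ (Fin m → Λ)) hQfree (LinearMap.ker p)
  rw [ext1_isZero_iff K τT (Fin m → Λ) hQfree p hp hkerp]
  intro u
  -- the diagram chase
  have hQP : LinearMap.ker q ≤ LinearMap.ker p := by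
    intro x hx
    rw [LinearMap.mem_ker] at hx ⊢
    show g (q x) = 0
    rw [hx, map_zero]
  obtain ⟨v₀, hv₀'⟩ := EC (u ∘ₗ Submodule.inclusion hQP)
  have hv₀ : ∀ y : LinearMap.ker q, v₀ y.1 = u (Submodule.inclusion hQP y) := by
    intro y
    exact congrArg (fun (w : LinearMap.ker q →ₗ[Λ] τT) => w y) hv₀'
  let u' : LinearMap.ker p →ₗ[Λ] τT := u - v₀ ∘ₗ (LinearMap.ker p).subtype
  have hu'0 : ∀ x : LinearMap.ker p, (x : Fin m → Λ) ∈ LinearMap.ker q → u' x = 0 := by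
    intro x hx
    have h2 : v₀ ((x : Fin m → Λ)) = u (Submodule.inclusion hQP ⟨x.1, hx⟩) := hv₀ ⟨x.1, hx⟩
    have h3 : Submodule.inclusion hQP ⟨x.1, hx⟩ = x := Subtype.ext rfl
    show u x - v₀ x.1 = 0
    rw [h2, h3, sub_self]
  have hrange : ∀ x : LinearMap.ker p, q x.1 ∈ LinearMap.range f := by
    intro x
    rw [hexact, LinearMap.mem_ker]
    exact x.2
  let e := LinearEquiv.ofInjective f hf
  let w : LinearMap.ker p →ₗ[Λ] X :=
    e.symm.toLinearMap ∘ₗ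
      LinearMap.codRestrict (LinearMap.range f) (q ∘ₗ (LinearMap.ker p).subtype) hrange
  have hfw : ∀ x : LinearMap.ker p, f (w x) = q x.1 := by
    intro x
    show f (e.symm ⟨q x.1, hrange x⟩) = q x.1
    have h1 := e.apply_symm_apply ⟨q x.1, hrange x⟩
    have h2 : ∀ z : X, (e z : C) = f z := fun z => rfl
    rw [← h2 (e.symm ⟨q x.1, hrange x⟩)] at *
    rw [h1]
  have hwsurj : Function.Surjective w := by
    intro x
    obtain ⟨y, hy⟩ := hq (f x)
    have hyp : y ∈ LinearMap.ker p := by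
      rw [LinearMap.mem_ker]
      show g (q y) = 0
      rw [hy]
      have : f x ∈ LinearMap.ker g := hexact ▸ LinearMap.mem_range_self f x
      exact this
    refine ⟨⟨y, hyp⟩, hf ?_⟩
    rw [hfw ⟨y, hyp⟩]
    exact hy
  have hker_le : LinearMap.ker w ≤ LinearMap.ker u' := by
    intro x hx
    rw [LinearMap.mem_ker] at hx ⊢
    apply hu'0 x
    rw [LinearMap.mem_ker]
    have := hfw x
    rw [hx, map_zero] at this
    exact this.symm
  let eW := w.quotKerEquivOfSurjective hwsurj
  let ubar : X →ₗ[Λ] τT :=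
    (Submodule.liftQ (LinearMap.ker w) u' hker_le) ∘ₗ eW.symm.toLinearMap
  have hubar : ∀ x : LinearMap.ker p, ubar (w x) = u' x := by
    intro x
    have h1 : eW.symm (w x) = Submodule.Quotient.mk x := by
      apply eW.injective
      rw [LinearEquiv.apply_symm_apply]
      rfl
    show (Submodule.liftQ (LinearMap.ker w) u' hker_le) (eW.symm (w x)) = u' x
    rw [h1]
    rfl
  obtain ⟨h, hh⟩ := happrox ubar
  refine ⟨v₀ + h ∘ₗ q, ?_⟩
  ext x
  show v₀ x.1 + h (q x.1) = u x
  have h4 : h (q x.1) = u' x := by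
    rw [← hfw x]
    have := congrArg (fun (w' : X →ₗ[Λ] τT) => w' (w x)) hh
    have h5 : h (f (w x)) = ubar (w x) := this
    rw [h5, hubar]
  rw [h4]
  show v₀ x.1 + (u x - v₀ x.1) = u x
  abel
end

end

/-- Let `H` be a finite dimensional hereditary algebra, `T` a tilting module and `τT` its
AR-translate, so that `F_T = {X : Hom(T,X) = 0} = Sub(τT)`, `Ext¹(τT, τT) = 0`, and (by the
AR-formula `D Ext¹(Y, τT) ≅ Hom(T, Y)`) any `Y` with `Ext¹(Y, τT) = 0` satisfies
`Hom(T, Y) = 0`.  If `X ∈ Sub(τT)` and `0 → X → C → K → 0` is exact with `X → C` a minimal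
left `add(τT)`-approximation, then `Hom(T, K) = 0`, i.e. `K` also lies in `F_T = Sub(τT)`. -/
theorem stmt18 (k : Type) [Field k] (H : Type) [Ring H] [Algebra k H]
    [FiniteDimensional k H]
    (hher : ∀ P : ModuleCat H, Projective P →
      ∀ N : Submodule H P, Projective (ModuleCat.of H N))
    (T : ModuleCat H) [Module.Finite H T] (hT : IsTilting H T)
    (τT : ModuleCat H) [Module.Finite H τT]
    (hτT : ∀ Y : ModuleCat.{0} H, Module.Finite H Y →
      ((∀ f : T →ₗ[H] Y, f = 0) ↔ memSub H τT Y))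
    (hextτ : Limits.IsZero (ext1 H τT τT))
    (hAR : ∀ Y : ModuleCat.{0} H, Module.Finite H Y →
      Limits.IsZero (ext1 H Y τT) → ∀ f : T →ₗ[H] Y, f = 0)
    (X C K : ModuleCat H) [Module.Finite H X] [Module.Finite H C] [Module.Finite H K]
    (hX : ∀ f : T →ₗ[H] X, f = 0)
    (f : X →ₗ[H] C) (g : C →ₗ[H] K)
    (hf : Function.Injective f) (hg : Function.Surjective g)
    (hexact : LinearMap.range f = LinearMap.ker g)
    (happrox : IsMinimalLeftAddApprox H τT X C f) :
    ∀ φ : T →ₗ[H] K, φ = 0 := by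
  intro φ
  have hher0 := hher_down hher
  -- universe-0 copies of X, C, K
  obtain ⟨nX, pX, hpX⟩ := Module.Finite.exists_fin' H X
  let X₀ : ModuleCat.{0} H := ModuleCat.of H ((Fin nX → H) ⧸ LinearMap.ker pX)
  let eX : X₀ ≃ₗ[H] X := pX.quotKerEquivOfSurjective hpX
  obtain ⟨nC, pC, hpC⟩ := Module.Finite.exists_fin' H C
  let C₀ : ModuleCat.{0} H := ModuleCat.of H ((Fin nC → H) ⧸ LinearMap.ker pC)
  let eC : C₀ ≃ₗ[H] C := pC.quotKerEquivOfSurjective hpC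
  obtain ⟨nK, pK, hpK⟩ := Module.Finite.exists_fin' H K
  let K₀ : ModuleCat.{0} H := ModuleCat.of H ((Fin nK → H) ⧸ LinearMap.ker pK)
  let eK : K₀ ≃ₗ[H] K := pK.quotKerEquivOfSurjective hpK
  haveI : Module.Finite H X₀ := Module.Finite.equiv eX.symm
  haveI : Module.Finite H C₀ := Module.Finite.equiv eC.symm
  haveI : Module.Finite H K₀ := Module.Finite.equiv eK.symm
  let f₀ : X₀ →ₗ[H] C₀ := eC.symm.toLinearMap ∘ₗ f ∘ₗ eX.toLinearMap
  let g₀ : C₀ →ₗ[H] K₀ := eK.symm.toLinearMap ∘ₗ g ∘ₗ eC.toLinearMap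
  have hf₀ : Function.Injective f₀ := by
    intro a b hab
    apply eX.injective
    apply hf
    apply eC.symm.injective
    exact hab
  have hg₀ : Function.Surjective g₀ := by
    intro y
    obtain ⟨c, hc⟩ := hg (eK y)
    refine ⟨eC.symm c, ?_⟩
    show eK.symm (g (eC (eC.symm c))) = y
    rw [eC.apply_symm_apply, hc, eK.symm_apply_apply]
  have hexact₀ : LinearMap.range f₀ = LinearMap.ker g₀ := by
    ext y
    constructor
    · rintro ⟨x₀, rfl⟩
      rw [LinearMap.mem_ker]
      show eK.symm (g (eC (eC.symm (f (eX x₀))))) = 0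
      rw [eC.apply_symm_apply]
      have : f (eX x₀) ∈ LinearMap.ker g := hexact ▸ LinearMap.mem_range_self f (eX x₀)
      rw [LinearMap.mem_ker] at this
      rw [this, map_zero]
    · intro hy
      rw [LinearMap.mem_ker] at hy
      have h1 : g (eC y) = 0 := by
        apply eK.symm.injective
        rw [map_zero]
        exact hy
      have h2 : eC y ∈ LinearMap.range f := by
        rw [hexact, LinearMap.mem_ker]; exact h1
      obtain ⟨x, hx⟩ := h2
      refine ⟨eX.symm x, ?_⟩
      show eC.symm (f (eX (eX.symm x))) = y
      rw [eX.apply_symm_apply, hx, eC.symm_apply_apply]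
  have hAddτ : ∃ (n : ℕ) (i : C₀ →ₗ[H] (Fin n → τT)) (p : (Fin n → τT) →ₗ[H] C₀),
      p ∘ₗ i = LinearMap.id := by
    obtain ⟨n, i, p, hpi⟩ := happrox.1
    refine ⟨n, i ∘ₗ eC.toLinearMap, eC.symm.toLinearMap ∘ₗ p, ?_⟩
    apply LinearMap.ext; intro x₀
    show eC.symm (p (i (eC x₀))) = x₀
    have := congrArg (fun (w : C →ₗ[H] C) => w (eC x₀)) hpi
    have h3 : p (i (eC x₀)) = eC x₀ := this
    rw [h3, eC.symm_apply_apply]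
  have hτTadd : ∃ (n : ℕ) (i : τT →ₗ[H] (Fin n → τT)) (p : (Fin n → τT) →ₗ[H] τT),
      p ∘ₗ i = LinearMap.id :=
    ⟨1, LinearMap.pi (fun _ => LinearMap.id), LinearMap.proj 0, by ext x; rfl⟩
  have happrox₀ : ∀ u : X₀ →ₗ[H] τT, ∃ h : C₀ →ₗ[H] τT, h ∘ₗ f₀ = u := by
    intro u
    obtain ⟨h, hh⟩ := happrox.2.1 τT hτTadd (u ∘ₗ eX.symm.toLinearMap)
    refine ⟨h ∘ₗ eC.toLinearMap, ?_⟩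
    apply LinearMap.ext; intro x₀
    show h (eC (eC.symm (f (eX x₀)))) = u x₀
    rw [eC.apply_symm_apply]
    have := congrArg (fun (w : X →ₗ[H] τT) => w (eX x₀)) hh
    have h4 : h (f (eX x₀)) = u (eX.symm (eX x₀)) := this
    rw [h4, eX.symm_apply_apply]
  have hKzero : Limits.IsZero (ext1 H K₀ τT) :=
    key_chase hher0 τT hextτ X₀ C₀ K₀ f₀ g₀ hf₀ hg₀ hexact₀ hAddτ happrox₀
  have h0 : eK.symm.toLinearMap ∘ₗ φ = 0 := hAR K₀ inferInstance hKzero _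
  ext x
  have := congrArg (fun (w : T →ₗ[H] K₀) => w x) h0
  have h5 : eK.symm (φ x) = 0 := this
  rw [show (0 : T →ₗ[H] K) x = 0 from rfl]
  exact (LinearEquiv.map_eq_zero_iff eK.symm).1 h5
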